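/- Suppose u is differentiable at x₀; φ₀ : ℝ → ℂⁿ and E₀ : ℝ → ℝ are differentiable at x₀ and satisfy the instantaneous eigenvalue equation H(x)·φ₀(x) = E₀(x)·φ₀(x) for all x in some neighborhood of x₀; and φᵢ ∈ ℂⁿ, Eᵢ ∈ ℝ satisfy H(x₀)·φᵢ = Eᵢ·φᵢ with Eᵢ ≠ E₀(x₀) and ⟨φᵢ, φ₀(x₀)⟩ = 0. Then the overlap of φᵢ with the derivative of the eigenpath satisfies ⟨φᵢ, φ₀'(x₀)⟩ = u'(x₀) · ⟨φᵢ, (H_f − H_i)(φ₀(x₀))⟩ / (E₀(x₀) − Eᵢ). (This is Lemma A.3 of the paper: the first-order perturbation-theory formula expressing the non-adiabatic coupling ⟨φᵢ|φ̇₀⟩ in terms of the matrix element of u̇·H' divided by the energy gap.) -/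

import Mathlib

open scoped InnerProductSpace

/-- Lemma A.3 of the paper: the first-order perturbation-theory formula expressing the
non-adiabatic coupling `⟨φᵢ|φ̇₀⟩` in terms of the matrix element of `u̇·H' = u̇·(H_f − H_i)`
divided by the energy gap, for the interpolating Hamiltonian
`H(x) = (1 − u(x))·H_i + u(x)·H_f`. -/
theorem stmt5 (n : ℕ) (hn : 1 ≤ n)
    (Hi Hf : EuclideanSpace ℂ (Fin n) →ₗ[ℂ] EuclideanSpace ℂ (Fin n))
    (hHi : Hi.IsSymmetric) (hHf : Hf.IsSymmetric)
    (u : ℝ → ℝ)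
    (H : ℝ → (EuclideanSpace ℂ (Fin n) →ₗ[ℂ] EuclideanSpace ℂ (Fin n)))
    (hH : ∀ x : ℝ, H x = ((1 - u x : ℝ) : ℂ) • Hi + ((u x : ℝ) : ℂ) • Hf)
    (x₀ : ℝ) (hu : DifferentiableAt ℝ u x₀)
    (φ₀ : ℝ → EuclideanSpace ℂ (Fin n)) (E₀ : ℝ → ℝ)
    (hφ₀ : DifferentiableAt ℝ φ₀ x₀) (hE₀ : DifferentiableAt ℝ E₀ x₀)
    (heig : ∀ᶠ x in nhds x₀, (H x) (φ₀ x) = (E₀ x : ℂ) • φ₀ x)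
    (φi : EuclideanSpace ℂ (Fin n)) (Ei : ℝ)
    (heigi : (H x₀) φi = (Ei : ℂ) • φi)
    (hgap : Ei ≠ E₀ x₀)
    (horth : ⟪φi, φ₀ x₀⟫_ℂ = 0) :
    ⟪φi, deriv φ₀ x₀⟫_ℂ =
      ((deriv u x₀ : ℝ) : ℂ) * ⟪φi, (Hf - Hi) (φ₀ x₀)⟫_ℂ / ((E₀ x₀ : ℂ) - (Ei : ℂ)) := by
  classical
  set d := deriv φ₀ x₀ with hd_def
  have hd : HasDerivAt φ₀ d x₀ := hφ₀.hasDerivAt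
  set v := φ₀ x₀ with hv_def
  have hu' : HasDerivAt (fun x => ((u x : ℝ) : ℂ)) ((deriv u x₀ : ℝ) : ℂ) x₀ :=
    (hu.hasDerivAt).ofReal_comp
  have h1u : HasDerivAt (fun x => ((1 - u x : ℝ) : ℂ)) (-((deriv u x₀ : ℝ) : ℂ)) x₀ := by
    have h : HasDerivAt (fun x => (1:ℝ) - u x) (-(deriv u x₀)) x₀ := by
      simpa [Pi.sub_def] using (hasDerivAt_const x₀ (1:ℝ)).sub hu.hasDerivAt
    simpa using h.ofReal_comp
  have hHiφ : HasDerivAt (fun x => Hi (φ₀ x)) (Hi d) x₀ := by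
    exact
      (((LinearMap.toContinuousLinearMap Hi).restrictScalars ℝ).hasFDerivAt.comp_hasDerivAt
        x₀ hd)
  have hHfφ : HasDerivAt (fun x => Hf (φ₀ x)) (Hf d) x₀ := by
    exact
      (((LinearMap.toContinuousLinearMap Hf).restrictScalars ℝ).hasFDerivAt.comp_hasDerivAt
        x₀ hd)
  have hF : HasDerivAt (fun x => ((1 - u x : ℝ):ℂ) • Hi (φ₀ x) + ((u x : ℝ):ℂ) • Hf (φ₀ x))
      ((((1 - u x₀ : ℝ):ℂ) • Hi d + (-((deriv u x₀:ℝ):ℂ)) • Hi v)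
        + (((u x₀:ℝ):ℂ) • Hf d + ((deriv u x₀:ℝ):ℂ) • Hf v)) x₀ :=
    (h1u.smul hHiφ).add (hu'.smul hHfφ)
  have hG : HasDerivAt (fun x => ((E₀ x : ℝ):ℂ) • φ₀ x)
      (((E₀ x₀:ℝ):ℂ) • d + ((deriv E₀ x₀:ℝ):ℂ) • v) x₀ :=
    (hE₀.hasDerivAt.ofReal_comp).smul hd
  have hFG : (fun x => ((1 - u x : ℝ):ℂ) • Hi (φ₀ x) + ((u x:ℝ):ℂ) • Hf (φ₀ x))
      =ᶠ[nhds x₀] (fun x => ((E₀ x : ℝ):ℂ) • φ₀ x) := by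
    filter_upwards [heig] with x hx
    rw [← hx, hH x]
    simp
  have key : (((1 - u x₀ : ℝ):ℂ) • Hi d + (-((deriv u x₀:ℝ):ℂ)) • Hi v)
        + (((u x₀:ℝ):ℂ) • Hf d + ((deriv u x₀:ℝ):ℂ) • Hf v)
      = ((E₀ x₀:ℝ):ℂ) • d + ((deriv E₀ x₀:ℝ):ℂ) • v :=
    hF.unique (hG.congr_of_eventuallyEq hFG)
  have hkey2 := congrArg (fun w => ⟪φi, w⟫_ℂ) key
  simp only [inner_add_right, inner_smul_right] at hkey2
  have h0 : ((1 - u x₀:ℝ):ℂ) • Hi φi + ((u x₀:ℝ):ℂ) • Hf φi = ((Ei:ℝ):ℂ) • φi := by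
    rw [← heigi, hH x₀]; simp
  have hsym := congrArg (fun w => ⟪w, d⟫_ℂ) h0
  simp only [inner_add_left, inner_smul_left, Complex.conj_ofReal, hHi φi d, hHf φi d]
    at hsym
  have hgapC : ((E₀ x₀ : ℂ)) - (Ei : ℂ) ≠ 0 := by
    rw [sub_ne_zero]
    exact_mod_cast (Ne.symm hgap)
  rw [show (Hf - Hi) v = Hf v - Hi v from rfl, inner_sub_right]
  rw [horth] at hkey2
  rw [eq_div_iff hgapC]
  linear_combination hsym - hkey2
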